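/- arXiv:0808.3004 — 3 statements merged into one kernel-verified Lean document; each statement's English description precedes it below -/
import Mathlib

section
/- The function p ↦ p(1-p)^k / (1 - (1-p)^k) is strictly decreasing on (0,1) for every integer k ≥ 1. -/
/-- The marginal stationary 'up'-transition probability of the k-in-a-row design,
p ↦ p(1-p)^k / (1 - (1-p)^k), is strictly decreasing on (0,1) for every k ≥ 1. -/
theorem kr_up_prob_strictAnti (k : ℕ) (hk : 1 ≤ k) :
    StrictAntiOn (fun p : ℝ => p * (1 - p) ^ k / (1 - (1 - p) ^ k)) (Set.Ioo 0 1) := by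
  have key : ∀ p ∈ Set.Ioo (0:ℝ) 1,
      p * (1 - p) ^ k / (1 - (1 - p) ^ k)
        = (∑ j ∈ Finset.range k, ((1 - p)⁻¹) ^ (j + 1))⁻¹ := by
    intro p hp
    obtain ⟨hp0, hp1⟩ := hp
    have hq : (0:ℝ) < 1 - p := by linarith
    have hqne : (1 - p) ≠ 0 := ne_of_gt hq
    have hfac : 1 - (1 - p) ^ k = (∑ i ∈ Finset.range k, (1 - p) ^ i) * p := by
      linear_combination geom_sum_mul (1 - p) k
    have hT : (∑ j ∈ Finset.range k, ((1 - p)⁻¹) ^ (j + 1)) * (1 - p) ^ k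
        = ∑ i ∈ Finset.range k, (1 - p) ^ i := by
      rw [Finset.sum_mul, ← Finset.sum_range_reflect (fun i => (1 - p) ^ i) k]
      apply Finset.sum_congr rfl
      intro j hj
      have hj' : j < k := Finset.mem_range.mp hj
      have hsplit : (1 - p) ^ k = (1 - p) ^ (j + 1) * (1 - p) ^ (k - 1 - j) := by
        rw [← pow_add]; congr 1; omega
      rw [hsplit, inv_pow, inv_mul_cancel_left₀ (pow_ne_zero _ hqne)]
    have hTval : (∑ j ∈ Finset.range k, ((1 - p)⁻¹) ^ (j + 1))
        = (∑ i ∈ Finset.range k, (1 - p) ^ i) / (1 - p) ^ k :=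
      (eq_div_iff (pow_ne_zero k hqne)).mpr hT
    rw [hfac, hTval, inv_div, mul_comm p ((1 - p) ^ k),
      mul_div_mul_right _ _ (ne_of_gt hp0)]
  intro x hx y hy hxy
  simp only
  rw [key x hx, key y hy]
  have hne : (Finset.range k).Nonempty := ⟨0, Finset.mem_range.mpr hk⟩
  have hxq : (0:ℝ) < 1 - x := by linarith [hx.2]
  have hyq : (0:ℝ) < 1 - y := by linarith [hy.2]
  have hlt : ∀ j ∈ Finset.range k,
      ((1 - x)⁻¹) ^ (j + 1) < ((1 - y)⁻¹) ^ (j + 1) := by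
    intro j _
    have h1 : (1 - x)⁻¹ < (1 - y)⁻¹ :=
      inv_strictAnti₀ hyq (by linarith)
    exact pow_lt_pow_left₀ h1 (le_of_lt (inv_pos.mpr hxq)) (Nat.succ_ne_zero j)
  have hsum : (∑ j ∈ Finset.range k, ((1 - x)⁻¹) ^ (j + 1))
      < ∑ j ∈ Finset.range k, ((1 - y)⁻¹) ^ (j + 1) :=
    Finset.sum_lt_sum_of_nonempty hne hlt
  have hxpos : 0 < ∑ j ∈ Finset.range k, ((1 - x)⁻¹) ^ (j + 1) :=
    Finset.sum_pos (fun j _ => pow_pos (inv_pos.mpr hxq) _) hne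
  exact inv_strictAnti₀ hxpos hsum
end

section
/- For a k-in-a-row design with transition probabilities governed by a strictly increasing F, the stationary relative frequency of the top internal state τ = k-1 within level u equals [1-F_u]^{k-1}·F_u / (1 - [1-F_u]^k), where F_u = F(l_u). Consequently the marginal stationary profile satisfies π_{u+1}/π_u = F_u(1-F_u)^k / (F_{u+1}(1 - (1-F_u)^k)). -/
/-- KR internal-state stationary structure: within a level the internal-state
frequencies are geometric with ratio (1-F_u), and the top internal state τ = k-1 has
relative frequency (1-F_u)^{k-1}·F_u/(1-(1-F_u)^k); consequently the marginal
stationary profile is π_{u+1}/π_u = F_u(1-F_u)^k / (F_{u+1}(1-(1-F_u)^k)). -/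
theorem kr_internal_states (k : ℕ) (hk : 1 ≤ k) (Fu Fv : ℝ)
    (hFu : Fu ∈ Set.Ioo (0 : ℝ) 1) (hFv : Fv ∈ Set.Ioo (0 : ℝ) 1)
    (w : ℕ → ℝ) (hw0 : 0 < w 0)
    (hgeom : ∀ τ, τ + 1 ≤ k - 1 → w (τ + 1) = (1 - Fu) * w τ)
    (πu πv : ℝ) (hπu : πu = ∑ τ ∈ Finset.range k, w τ)
    (hbal : w (k - 1) * (1 - Fu) = πv * Fv) :
    w (k - 1) / πu = (1 - Fu) ^ (k - 1) * Fu / (1 - (1 - Fu) ^ k) ∧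
    πv / πu = Fu * (1 - Fu) ^ k / (Fv * (1 - (1 - Fu) ^ k)) := by
  obtain ⟨hFu0, hFu1⟩ := hFu
  obtain ⟨hFv0, hFv1⟩ := hFv
  set r : ℝ := 1 - Fu with hr
  have hr0 : 0 < r := by simp [hr]; linarith
  have hr1 : r < 1 := by simp [hr]; linarith
  have hrk : r ^ k < 1 := pow_lt_one₀ hr0.le hr1 (by omega)
  have hrkpos : (0:ℝ) < 1 - r ^ k := by linarith
  have hwτ : ∀ τ, τ ≤ k - 1 → w τ = r ^ τ * w 0 := by
    intro τ hτ
    induction τ with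
    | zero => simp
    | succ n ih =>
      rw [hgeom n hτ, ih (by omega), pow_succ]
      ring
  have hπu' : πu = w 0 * ((1 - r ^ k) / (1 - Fu + Fu - r)) := by
    rw [hπu]
    have : ∀ τ ∈ Finset.range k, w τ = r ^ τ * w 0 := by
      intro τ hτ
      exact hwτ τ (by simp at hτ; omega)
    rw [Finset.sum_congr rfl this, ← Finset.sum_mul, geom_sum_eq (by linarith)]
    ring
  have hFueq : (1:ℝ) - Fu + Fu - r = Fu := by simp [hr]
  rw [hFueq] at hπu'
  have hπupos : 0 < πu := by
    rw [hπu']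
    positivity
  have hwk : w (k - 1) = r ^ (k - 1) * w 0 := hwτ _ le_rfl
  have h1 : w (k - 1) / πu = r ^ (k - 1) * Fu / (1 - r ^ k) := by
    rw [hwk, hπu']
    field_simp
  refine ⟨h1, ?_⟩
  have hπv : πv = w (k - 1) * r / Fv := by
    field_simp
    linarith [hbal]
  rw [hπv, hwk, hπu']
  have hrk' : r ^ (k - 1) * r = r ^ k := by
    rw [← pow_succ]
    congr 1
    omega
  field_simp
  exact hrk'
end

section
/- Fix k ≥ 2 and let p = 1 - (1/2)^{1/k} be the common target. The ratio of KR to BCD stationary profiles, r(F) = [F(1-F)^{k-1}/(1 - (1-F)^k)]·[(1-p)/p], equals 1 at F = p and is strictly decreasing in F on (0,1). Hence the KR design is more 'peaked' than the same-target BCD design: its profile is at least as large below target and at most as large above target. -/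
open Finset

private lemma aux_sum_lt (k : ℕ) (hk : 2 ≤ k) {a b : ℝ} (ha : 0 < a) (hab : a < b) :
    a ^ (k - 1) * ∑ i ∈ range k, b ^ i < b ^ (k - 1) * ∑ i ∈ range k, a ^ i := by
  rw [Finset.mul_sum, Finset.mul_sum]
  apply Finset.sum_lt_sum
  · intro i hi
    have hik : i ≤ k - 1 := by
      have := Finset.mem_range.mp hi; omega
    have hsplit : k - 1 = (k - 1 - i) + i := by omega
    rw [hsplit, pow_add, pow_add]
    have h1 : a ^ (k - 1 - i) ≤ b ^ (k - 1 - i) :=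
      pow_le_pow_left₀ ha.le hab.le _
    have hb : 0 < b := ha.trans hab
    have h2 : (0:ℝ) ≤ a ^ i * b ^ i := by positivity
    calc a ^ (k - 1 - i) * a ^ i * b ^ i = a ^ (k - 1 - i) * (a ^ i * b ^ i) := by ring
      _ ≤ b ^ (k - 1 - i) * (a ^ i * b ^ i) := by
            exact mul_le_mul_of_nonneg_right h1 h2
      _ = b ^ (k - 1 - i) * b ^ i * a ^ i := by ring
  · refine ⟨0, Finset.mem_range.mpr (by omega), ?_⟩
    simp only [pow_zero, mul_one]
    exact pow_lt_pow_left₀ hab ha.le (by omega)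

private lemma aux_geom (q : ℝ) (k : ℕ) :
    1 - q ^ k = (1 - q) * ∑ i ∈ range k, q ^ i := by
  have := geom_sum_mul q k
  nlinarith [this]

/-- With common target p = 1 - (1/2)^{1/k}, the ratio of KR to BCD stationary profiles
r(F) = [F(1-F)^{k-1}/(1-(1-F)^k)]·[(1-p)/p] equals 1 at F = p and is strictly
decreasing on (0,1); hence KR is more 'peaked' than same-target BCD. -/
theorem kr_more_peaked_than_bcd (k : ℕ) (hk : 2 ≤ k) :
    let p : ℝ := 1 - (1/2 : ℝ) ^ ((1 : ℝ) / k)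
    let r : ℝ → ℝ := fun F =>
      F * (1 - F) ^ (k - 1) / (1 - (1 - F) ^ k) * ((1 - p) / p)
    r p = 1 ∧ StrictAntiOn r (Set.Ioo 0 1) ∧
    (∀ F ∈ Set.Ioo (0 : ℝ) 1, F ≤ p → 1 ≤ r F) ∧
    (∀ F ∈ Set.Ioo (0 : ℝ) 1, p ≤ F → r F ≤ 1) := by
  intro p r
  have hk0 : (k:ℝ) ≠ 0 := Nat.cast_ne_zero.mpr (by omega)
  set q0 : ℝ := (1/2 : ℝ) ^ ((1 : ℝ) / k) with hq0def
  have hq0pos : 0 < q0 := Real.rpow_pos_of_pos (by norm_num) _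
  have hq0lt1 : q0 < 1 := by
    apply Real.rpow_lt_one (by norm_num) (by norm_num)
    positivity
  have hq0k : q0 ^ k = 1/2 := by
    rw [hq0def, ← Real.rpow_natCast ((1/2:ℝ) ^ ((1:ℝ)/k)) k, ← Real.rpow_mul (by norm_num)]
    rw [one_div_mul_cancel hk0, Real.rpow_one]
  have hp0 : 0 < p := by simp only [p]; linarith
  have hp1 : p < 1 := by simp only [p]; linarith
  have h1p : 1 - p = q0 := by simp only [p]; ring
  -- positivity of c
  have hc : 0 < (1 - p) / p := div_pos (by linarith) hp0
  -- r equals simplified form on Ioo 0 1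
  have hSpos : ∀ q : ℝ, 0 < q → 0 < ∑ i ∈ range k, q ^ i := by
    intro q hq
    apply Finset.sum_pos (fun i _ => pow_pos hq i)
    exact Finset.nonempty_range_iff.mpr (by omega)
  have hreq : ∀ F ∈ Set.Ioo (0:ℝ) 1, r F =
      (1 - F) ^ (k - 1) / (∑ i ∈ range k, (1 - F) ^ i) * ((1 - p) / p) := by
    intro F hF
    obtain ⟨hF0, hF1⟩ := hF
    have hq : 0 < 1 - F := by linarith
    have hS := hSpos (1 - F) hq
    simp only [r]
    rw [aux_geom (1 - F) k]
    rw [show (1 - (1 - F)) = F by ring]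
    rw [mul_comm F ((∑ i ∈ range k, (1 - F) ^ i)) ]
    rw [show F * (1 - F) ^ (k-1) / ((∑ i ∈ range k, (1 - F) ^ i) * F)
        = (1 - F) ^ (k-1) / (∑ i ∈ range k, (1 - F) ^ i) from by
      field_simp]
  -- r p = 1
  have hrp : r p = 1 := by
    simp only [r, h1p]
    rw [hq0k]
    have hpow : q0 ^ (k - 1) * q0 = q0 ^ k := by
      rw [← pow_succ]
      congr 1
      omega
    field_simp
    nlinarith [hpow, hq0k]
  have hanti : StrictAntiOn r (Set.Ioo 0 1) := by
    intro F1 hF1 F2 hF2 h12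
    rw [hreq F1 hF1, hreq F2 hF2]
    obtain ⟨hF10, hF11⟩ := hF1
    obtain ⟨hF20, hF21⟩ := hF2
    have hq2 : 0 < 1 - F2 := by linarith
    have hq1 : 0 < 1 - F1 := by linarith
    have hqq : 1 - F2 < 1 - F1 := by linarith
    have hS1 := hSpos (1 - F1) hq1
    have hS2 := hSpos (1 - F2) hq2
    apply mul_lt_mul_of_pos_right _ hc
    rw [div_lt_div_iff₀ hS2 hS1]
    exact aux_sum_lt k hk hq2 hqq
  have hpmem : p ∈ Set.Ioo (0:ℝ) 1 := ⟨hp0, hp1⟩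
  refine ⟨hrp, hanti, ?_, ?_⟩
  · intro F hF hFp
    rcases eq_or_lt_of_le hFp with h | h
    · rw [h, hrp]
    · have := hanti hF hpmem h
      rw [hrp] at this
      linarith
  · intro F hF hpF
    rcases eq_or_lt_of_le hpF with h | h
    · rw [← h, hrp]
    · have := hanti hpmem hF h
      rw [hrp] at this
      linarith
end
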